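/- For all integers n and p with p ≥ 2 and n ≥ 2p, one has Σ_{j=1}^{p−1} Σ_{k=0}^{n−2p} C(p,j) · B(2j+k−1, n−2j−k−1) ≤ 10, where C(p,j) is the binomial coefficient and B is the Beta function (note that both arguments of B are ≥ 1 in this range). -/

import Mathlib

/-- The Beta function `B(α,β) = Γ(α)Γ(β)/Γ(α+β)`. -/
noncomputable def realBeta (a b : ℝ) : ℝ := Real.Gamma a * Real.Gamma b / Real.Gamma (a + b)

open scoped Nat

lemma realBeta_nat {a b : ℕ} (ha : 1 ≤ a) (hb : 1 ≤ b) :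
    realBeta a b = ((a-1)! : ℝ) * ((b-1)! : ℝ) / ((a + b - 1)! : ℝ) := by
  obtain ⟨a', rfl⟩ : ∃ a', a = a' + 1 := ⟨a - 1, by omega⟩
  obtain ⟨b', rfl⟩ : ∃ b', b = b' + 1 := ⟨b - 1, by omega⟩
  unfold realBeta
  have h1 : ((a' + 1 : ℕ) : ℝ) = (a' : ℝ) + 1 := by push_cast; ring
  have h2 : ((b' + 1 : ℕ) : ℝ) = (b' : ℝ) + 1 := by push_cast; ring
  have h3 : ((a' + 1 : ℕ) : ℝ) + ((b' + 1 : ℕ) : ℝ) = ((a' + b' + 1 : ℕ) : ℝ) + 1 := by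
    push_cast; ring
  rw [h3, Real.Gamma_nat_eq_factorial, h1, Real.Gamma_nat_eq_factorial,
    h2, Real.Gamma_nat_eq_factorial]
  have e : a' + 1 + (b' + 1) - 1 = a' + b' + 1 := by omega
  rw [e]
  simp

/-- Row monotonicity of binomial coefficients up to the middle. -/
lemma choose_row_mono {N a b : ℕ} (hab : a ≤ b) (hb : 2 * b ≤ N) :
    N.choose a ≤ N.choose b := by
  induction b with
  | zero => interval_cases a; rfl
  | succ m ih =>
    rcases Nat.lt_or_ge a (m+1) with h | h
    · have h1 : N.choose a ≤ N.choose m := ih (by omega) (by omega)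
      refine h1.trans (Nat.choose_le_succ_of_lt_half_left ?_)
      have : m + 1 ≤ N / 2 := (Nat.le_div_iff_mul_le two_pos).mpr (by omega)
      omega
    · have : a = m + 1 := by omega
      simp [this]

lemma le_choose_of_mid {M k : ℕ} (h1 : 1 ≤ k) (h2 : k < M) : M ≤ M.choose k := by
  rcases le_or_gt (2*k) M with h | h
  · have := choose_row_mono h1 h
    simpa [Nat.choose_one_right] using this
  · have hsym : M.choose (M - k) = M.choose k := Nat.choose_symm h2.le
    have := choose_row_mono (N := M) (a := 1) (b := M - k) (by omega) (by omega)
    rw [Nat.choose_one_right, hsym] at this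
    exact this

lemma sum_inv_choose_le (M : ℕ) :
    ∑ k ∈ Finset.range (M + 1), (1 / (M.choose k : ℝ)) ≤ 3 := by
  rcases Nat.eq_zero_or_pos M with rfl | hM
  · norm_num
  · obtain ⟨m, rfl⟩ : ∃ m, M = m + 1 := ⟨M - 1, by omega⟩
    rw [Finset.sum_range_succ, Finset.sum_range_succ']
    have hmid : ∑ i ∈ Finset.range m, (1 / ((m+1).choose (i+1) : ℝ))
        ≤ ∑ i ∈ Finset.range m, (1 / ((m+1) : ℝ)) := by
      refine Finset.sum_le_sum fun i hi => ?_
      rw [Finset.mem_range] at hi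
      have h := le_choose_of_mid (M := m+1) (k := i+1) (by omega) (by omega)
      have hpos : (0:ℝ) < ((m+1:ℕ) : ℝ) := by positivity
      gcongr
      exact_mod_cast h
    have hsum : ∑ i ∈ Finset.range m, (1 / ((m+1) : ℝ)) ≤ 1 := by
      rw [Finset.sum_const, Finset.card_range, nsmul_eq_mul, mul_one_div,
        div_le_one (by positivity)]
      linarith
    simp only [Nat.choose_zero_right, Nat.choose_self, Nat.cast_one, div_one]
    linarith [hmid.trans hsum]

lemma choose_mul_choose_le (A B u v : ℕ) :
    A.choose u * B.choose v ≤ (A + B).choose (u + v) := by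
  rw [Nat.add_choose_eq]
  exact Finset.single_le_sum (f := fun ij : ℕ × ℕ => A.choose ij.1 * B.choose ij.2)
    (fun i _ => Nat.zero_le _) (a := (u, v)) (Finset.HasAntidiagonal.mem_antidiagonal.mpr rfl)

lemma mid_choose_aux {p j : ℕ} (h2 : 2 ≤ j) (hj : 2 * j ≤ p) :
    p.choose j ≤ (2*p - 4).choose (2*j - 2) := by
  have h1 : p.choose j ≤ (2*p-4).choose j := Nat.choose_le_choose j (by omega)
  exact h1.trans (choose_row_mono (by omega) (by omega))

lemma mid_choose {p j : ℕ} (h2 : 2 ≤ j) (hj : j + 2 ≤ p) :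
    p.choose j ≤ (2*p - 4).choose (2*j - 2) := by
  rcases le_or_gt (2*j) p with h | h
  · exact mid_choose_aux h2 h
  · have e1 : p.choose j = p.choose (p - j) := by
      rw [Nat.choose_symm (by omega)]
    have h' := mid_choose_aux (p := p) (j := p - j) (by omega) (by omega)
    rw [e1]
    refine h'.trans_eq ?_
    have e2 : 2*(p-j) - 2 = (2*p-4) - (2*j-2) := by omega
    rw [e2, Nat.choose_symm (by omega)]

theorem stmt15 (n p : ℕ) (hp : 2 ≤ p) (hn : 2 * p ≤ n) :
    ∑ j ∈ Finset.Icc 1 (p - 1), ∑ k ∈ Finset.range (n - 2 * p + 1),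
        (p.choose j : ℝ) * realBeta ((2 * j + k - 1 : ℕ) : ℝ) ((n - 2 * j - k - 1 : ℕ) : ℝ) ≤ 10 := by
  have hn4 : 4 ≤ n := by omega
  have hn3R : (0:ℝ) < ((n-3:ℕ) : ℝ) := by
    have : 0 < n - 3 := by omega
    exact_mod_cast this
  -- per-term bound
  have key : ∀ j ∈ Finset.Icc 1 (p-1), ∀ k ∈ Finset.range (n - 2*p + 1),
      (p.choose j : ℝ) * realBeta ((2 * j + k - 1 : ℕ) : ℝ) ((n - 2 * j - k - 1 : ℕ) : ℝ)
        ≤ ((p.choose j : ℝ) / (((2*p-4).choose (2*j-2) : ℕ) : ℝ)) * (1 / ((n-3:ℕ) : ℝ))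
            * (1 / (((n-2*p).choose k : ℕ) : ℝ)) := by
    intro j hj k hk
    rw [Finset.mem_Icc] at hj
    rw [Finset.mem_range] at hk
    have hj1 : 1 ≤ j := hj.1
    have hj2 : j ≤ p - 1 := hj.2
    have hk' : k ≤ n - 2*p := by omega
    have hB : realBeta ((2 * j + k - 1 : ℕ) : ℝ) ((n - 2 * j - k - 1 : ℕ) : ℝ)
        = ((2*j+k-2)! : ℝ) * ((n-2*j-k-2)! : ℝ) / ((n-3)! : ℝ) := by
      rw [realBeta_nat (by omega) (by omega)]
      have e1 : 2*j+k-1-1 = 2*j+k-2 := by omega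
      have e2 : n-2*j-k-1-1 = n-2*j-k-2 := by omega
      have e3 : (2*j+k-1)+(n-2*j-k-1)-1 = n-3 := by omega
      rw [e1, e2, e3]
    have hnat : ((n-3) * ((2*p-4).choose (2*j-2) * (n-2*p).choose k))
        * ((2*j+k-2)! * (n-2*j-k-2)!) ≤ (n-3)! := by
      have hv : (2*p-4).choose (2*j-2) * (n-2*p).choose k ≤ (n-4).choose (2*j+k-2) := by
        have h := choose_mul_choose_le (2*p-4) (n-2*p) (2*j-2) k
        have e : 2*p-4 + (n-2*p) = n-4 := by omega
        have e' : 2*j-2 + k = 2*j+k-2 := by omega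
        rwa [e, e'] at h
      have hfac : (n-4).choose (2*j+k-2) * ((2*j+k-2)! * (n-2*j-k-2)!) = (n-4)! := by
        have h := Nat.choose_mul_factorial_mul_factorial
          (n := n-4) (k := 2*j+k-2) (by omega)
        have e : n-4-(2*j+k-2) = n-2*j-k-2 := by omega
        rw [e] at h
        rw [← h]; ring
      calc (n-3) * ((2*p-4).choose (2*j-2) * (n-2*p).choose k)
            * ((2*j+k-2)! * (n-2*j-k-2)!)
          ≤ (n-3) * ((n-4).choose (2*j+k-2)) * ((2*j+k-2)! * (n-2*j-k-2)!) := by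
            exact Nat.mul_le_mul_right _ (Nat.mul_le_mul_left _ hv)
        _ = (n-3) * (n-4)! := by rw [mul_assoc, hfac]
        _ = (n-3)! := by
            have e : n - 3 = (n-4) + 1 := by omega
            rw [e, Nat.factorial_succ]
    have hC1 : 0 < ((2*p-4).choose (2*j-2)) := Nat.choose_pos (by omega)
    have hC2 : 0 < ((n-2*p).choose k) := Nat.choose_pos hk'
    have hC1R : (0:ℝ) < (((2*p-4).choose (2*j-2) : ℕ) : ℝ) := by exact_mod_cast hC1
    have hC2R : (0:ℝ) < (((n-2*p).choose k : ℕ) : ℝ) := by exact_mod_cast hC2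
    have hmain : ((2*j+k-2)! : ℝ) * ((n-2*j-k-2)! : ℝ) / ((n-3)! : ℝ)
        ≤ 1 / (((n-3:ℕ) : ℝ) * (((2*p-4).choose (2*j-2) : ℕ) : ℝ)
            * (((n-2*p).choose k : ℕ) : ℝ)) := by
      rw [div_le_div_iff₀ (by positivity) (by positivity)]
      have h := (Nat.cast_le (α := ℝ)).mpr hnat
      push_cast at h
      nlinarith [h]
    rw [hB]
    calc (p.choose j : ℝ) * (((2*j+k-2)! : ℝ) * ((n-2*j-k-2)! : ℝ) / ((n-3)! : ℝ))
        ≤ (p.choose j : ℝ) * (1 / (((n-3:ℕ) : ℝ) * (((2*p-4).choose (2*j-2) : ℕ) : ℝ)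
            * (((n-2*p).choose k : ℕ) : ℝ))) := by
          exact mul_le_mul_of_nonneg_left hmain (by positivity)
      _ = ((p.choose j : ℝ) / (((2*p-4).choose (2*j-2) : ℕ) : ℝ)) * (1 / ((n-3:ℕ) : ℝ))
            * (1 / (((n-2*p).choose k : ℕ) : ℝ)) := by
          simp only [one_div, mul_inv, div_eq_mul_inv]
          ring
  -- sum the bound
  have step1 : ∑ j ∈ Finset.Icc 1 (p - 1), ∑ k ∈ Finset.range (n - 2 * p + 1),
        (p.choose j : ℝ) * realBeta ((2 * j + k - 1 : ℕ) : ℝ) ((n - 2 * j - k - 1 : ℕ) : ℝ)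
      ≤ ∑ j ∈ Finset.Icc 1 (p - 1), ∑ k ∈ Finset.range (n - 2 * p + 1),
        ((p.choose j : ℝ) / (((2*p-4).choose (2*j-2) : ℕ) : ℝ)) * (1 / ((n-3:ℕ) : ℝ))
            * (1 / (((n-2*p).choose k : ℕ) : ℝ)) :=
    Finset.sum_le_sum fun j hj => Finset.sum_le_sum fun k hk => key j hj k hk
  have step2 : ∑ j ∈ Finset.Icc 1 (p - 1), ∑ k ∈ Finset.range (n - 2 * p + 1),
        ((p.choose j : ℝ) / (((2*p-4).choose (2*j-2) : ℕ) : ℝ)) * (1 / ((n-3:ℕ) : ℝ))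
            * (1 / (((n-2*p).choose k : ℕ) : ℝ))
      ≤ ∑ j ∈ Finset.Icc 1 (p - 1),
        ((p.choose j : ℝ) / (((2*p-4).choose (2*j-2) : ℕ) : ℝ)) * (1 / ((n-3:ℕ) : ℝ)) * 3 := by
    refine Finset.sum_le_sum fun j hj => ?_
    rw [← Finset.mul_sum]
    refine mul_le_mul_of_nonneg_left ?_ (by positivity)
    exact sum_inv_choose_le (n - 2*p)
  -- outer sum bound
  have houter : ∑ j ∈ Finset.Icc 1 (p - 1),
      ((p.choose j : ℝ) / (((2*p-4).choose (2*j-2) : ℕ) : ℝ)) ≤ 3 * ((p:ℝ) - 1) := by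
    have per : ∀ j ∈ Finset.Icc 1 (p-1),
        ((p.choose j : ℝ) / (((2*p-4).choose (2*j-2) : ℕ) : ℝ))
        ≤ 1 + (if j = 1 then ((p:ℝ) - 1) else 0) + (if j = p-1 then ((p:ℝ) - 1) else 0) := by
      intro j hj
      rw [Finset.mem_Icc] at hj
      have hpR : (2:ℝ) ≤ (p:ℝ) := by exact_mod_cast hp
      by_cases h1 : j = 1
      · subst h1
        have e : 2*1 - 2 = 0 := by omega
        rw [e, Nat.choose_zero_right, Nat.choose_one_right]
        rw [Nat.cast_one, div_one, if_pos rfl]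
        by_cases h2 : (1:ℕ) = p - 1
        · rw [if_pos h2]; linarith
        · rw [if_neg h2]; linarith
      by_cases h2 : j = p-1
      · subst h2
        have e : 2*(p-1) - 2 = 2*p - 4 := by omega
        rw [e, Nat.choose_self]
        have e2 : p.choose (p-1) = p := by
          have := Nat.choose_symm (n := p) (k := p - 1) (by omega)
          have e3 : p - (p - 1) = 1 := by omega
          rw [e3, Nat.choose_one_right] at this
          omega
        rw [e2, Nat.cast_one, div_one, if_pos rfl, if_neg h1]
        linarith
      · have h3 : 2 ≤ j := by omega
        have h4 : j + 2 ≤ p := by omega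
        have hle := mid_choose h3 h4
        have hC1 : 0 < ((2*p-4).choose (2*j-2)) := Nat.choose_pos (by omega)
        have : ((p.choose j : ℕ) : ℝ) / (((2*p-4).choose (2*j-2) : ℕ) : ℝ) ≤ 1 := by
          rw [div_le_one (by exact_mod_cast hC1)]
          exact_mod_cast hle
        simp only [if_neg h1, if_neg h2]
        linarith
    calc ∑ j ∈ Finset.Icc 1 (p - 1),
          ((p.choose j : ℝ) / (((2*p-4).choose (2*j-2) : ℕ) : ℝ))
        ≤ ∑ j ∈ Finset.Icc 1 (p - 1),
          (1 + (if j = 1 then ((p:ℝ) - 1) else 0) + (if j = p-1 then ((p:ℝ) - 1) else 0)) :=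
          Finset.sum_le_sum per
      _ ≤ 3 * ((p:ℝ) - 1) := by
          rw [Finset.sum_add_distrib, Finset.sum_add_distrib, Finset.sum_const,
            Nat.card_Icc, Finset.sum_ite_eq', Finset.sum_ite_eq']
          have m1 : (1:ℕ) ∈ Finset.Icc 1 (p-1) := by
            rw [Finset.mem_Icc]; omega
          have m2 : p - 1 ∈ Finset.Icc 1 (p-1) := by
            rw [Finset.mem_Icc]; omega
          rw [if_pos m1, if_pos m2, nsmul_eq_mul]
          have e : p - 1 + 1 - 1 = p - 1 := by omega
          rw [e]
          have : ((p - 1 : ℕ) : ℝ) = (p:ℝ) - 1 := by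
            have : (1:ℕ) ≤ p := by omega
            push_cast [this]; ring
          rw [this]; ring_nf
          linarith
    -- end houter
  have step3 : ∑ j ∈ Finset.Icc 1 (p - 1),
        ((p.choose j : ℝ) / (((2*p-4).choose (2*j-2) : ℕ) : ℝ)) * (1 / ((n-3:ℕ) : ℝ)) * 3
      = (3 / ((n-3:ℕ) : ℝ)) * ∑ j ∈ Finset.Icc 1 (p - 1),
        ((p.choose j : ℝ) / (((2*p-4).choose (2*j-2) : ℕ) : ℝ)) := by
    rw [Finset.mul_sum]
    refine Finset.sum_congr rfl fun j _ => by ring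
  have final : (3 / ((n-3:ℕ) : ℝ)) * (3 * ((p:ℝ) - 1)) ≤ 10 := by
    rw [div_mul_eq_mul_div, div_le_iff₀ hn3R]
    have hcast : ((n-3:ℕ) : ℝ) = (n:ℝ) - 3 := by
      push_cast [show (3:ℕ) ≤ n by omega]; ring
    rw [hcast]
    have hnR : 2 * (p:ℝ) ≤ (n:ℝ) := by exact_mod_cast hn
    have hpR : (2:ℝ) ≤ (p:ℝ) := by exact_mod_cast hp
    nlinarith
  calc ∑ j ∈ Finset.Icc 1 (p - 1), ∑ k ∈ Finset.range (n - 2 * p + 1),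
        (p.choose j : ℝ) * realBeta ((2 * j + k - 1 : ℕ) : ℝ) ((n - 2 * j - k - 1 : ℕ) : ℝ)
      ≤ ∑ j ∈ Finset.Icc 1 (p - 1),
        ((p.choose j : ℝ) / (((2*p-4).choose (2*j-2) : ℕ) : ℝ)) * (1 / ((n-3:ℕ) : ℝ)) * 3 :=
        step1.trans step2
    _ = (3 / ((n-3:ℕ) : ℝ)) * ∑ j ∈ Finset.Icc 1 (p - 1),
        ((p.choose j : ℝ) / (((2*p-4).choose (2*j-2) : ℕ) : ℝ)) := step3
    _ ≤ (3 / ((n-3:ℕ) : ℝ)) * (3 * ((p:ℝ) - 1)) := by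
        refine mul_le_mul_of_nonneg_left houter (by positivity)
    _ ≤ 10 := final
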